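/- The pair of functions b_{++}(x,t) = -π e^{-2it}/cos(2x) and B_{--}(x,t) = e^{2it}/(π cos(2x)) satisfies the separated nonlinear Schrödinger system 2i ∂_t b_{++} = -∂_x² b_{++} - 8 b_{++}² B_{--} and 2i ∂_t B_{--} = ∂_x² B_{--} + 8 b_{++} B_{--}², at every point (x,t) with cos(2x) ≠ 0. -/

import Mathlib

open Complex

/-- The special periodic solution `b₊₊(x,t) = -π e^{-2it}/cos(2x)`. -/
noncomputable def bpp (x t : ℝ) : ℂ :=
  -(Real.pi : ℂ) * Complex.exp (-2 * I * t) / Complex.cos (2 * x)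

/-- The special periodic solution `B₋₋(x,t) = e^{2it}/(π cos(2x))`. -/
noncomputable def Bmm (x t : ℝ) : ℂ :=
  Complex.exp (2 * I * t) / ((Real.pi : ℂ) * Complex.cos (2 * x))

lemma hcos (x : ℝ) : HasDerivAt (fun x' : ℝ => Complex.cos (2 * (x' : ℂ)))
    (-(2 * Complex.sin (2 * x))) x := by
  have h1 : HasDerivAt (fun z : ℂ => Complex.cos (2 * z))
      (-Complex.sin (2 * (x:ℂ)) * (2 * 1)) (x : ℂ) := ((hasDerivAt_id (x:ℂ)).const_mul 2).ccos
  have := h1.comp_ofReal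
  convert this using 1
  ring

lemma hsin (x : ℝ) : HasDerivAt (fun x' : ℝ => Complex.sin (2 * (x' : ℂ)))
    (2 * Complex.cos (2 * x)) x := by
  have h1 : HasDerivAt (fun z : ℂ => Complex.sin (2 * z))
      (Complex.cos (2 * (x:ℂ)) * (2 * 1)) (x : ℂ) := ((hasDerivAt_id (x:ℂ)).const_mul 2).csin
  have := h1.comp_ofReal
  convert this using 1
  ring

lemma d1 (C : ℂ) (x : ℝ) (h : Complex.cos (2 * (x : ℂ)) ≠ 0) :
    HasDerivAt (fun x' : ℝ => C / Complex.cos (2 * (x' : ℂ)))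
      (2 * C * Complex.sin (2 * x) / Complex.cos (2 * x) ^ 2) x := by
  have := (hasDerivAt_const x C).div (hcos x) h
  convert this using 1
  · rfl
  · rfl
  ring

lemma d2 (C : ℂ) (x : ℝ) (h : Complex.cos (2 * (x : ℂ)) ≠ 0) :
    deriv (fun x' : ℝ => deriv (fun x'' : ℝ => C / Complex.cos (2 * (x'' : ℂ))) x') x
      = (8 * C - 4 * C * Complex.cos (2*x) ^ 2) / Complex.cos (2 * x) ^ 3 := by
  have hev : ∀ᶠ x' : ℝ in nhds x, Complex.cos (2 * (x' : ℂ)) ≠ 0 := by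
    have : ContinuousAt (fun x' : ℝ => Complex.cos (2 * (x' : ℂ))) x :=
      (Complex.continuous_cos.comp (continuous_const.mul Complex.continuous_ofReal)).continuousAt
    exact this.eventually_ne h
  have heq : deriv (fun x'' : ℝ => C / Complex.cos (2 * (x'' : ℂ)))
      =ᶠ[nhds x] fun x' : ℝ => 2 * C * Complex.sin (2 * (x' : ℂ)) / Complex.cos (2 * (x' : ℂ)) ^ 2 :=
    hev.mono fun x' hx' => (d1 C x' hx').deriv
  rw [Filter.EventuallyEq.deriv_eq heq]
  have hnum : HasDerivAt (fun x' : ℝ => 2 * C * Complex.sin (2 * (x' : ℂ)))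
      (2 * C * (2 * Complex.cos (2 * x))) x := (hsin x).const_mul (2 * C)
  have hden : HasDerivAt (fun x' : ℝ => Complex.cos (2 * (x' : ℂ)) ^ 2)
      (2 * Complex.cos (2 * x) * (-(2 * Complex.sin (2 * x)))) x := by
    have h2 := (hcos x).mul (hcos x)
    simp only [pow_two]
    convert h2 using 1
    · rfl
    · rfl
    ring
  have hq := hnum.div hden (pow_ne_zero 2 h)
  rw [HasDerivAt.deriv (f := fun x' : ℝ => 2 * C * Complex.sin (2 * (x' : ℂ)) / Complex.cos (2 * (x' : ℂ)) ^ 2) hq]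
  have hpyth : Complex.sin (2*(x:ℂ)) ^ 2 = 1 - Complex.cos (2*(x:ℂ)) ^ 2 := by
    linear_combination Complex.sin_sq_add_cos_sq (2*(x:ℂ))
  field_simp
  linear_combination (8*C) * hpyth


lemma hexpD (a : ℂ) (t : ℝ) : HasDerivAt (fun t' : ℝ => Complex.exp (a * (t' : ℂ)))
    (Complex.exp (a * t) * a) t := by
  have h1 : HasDerivAt (fun z : ℂ => Complex.exp (a * z))
      (Complex.exp (a * (t:ℂ)) * (a * 1)) (t : ℂ) := ((hasDerivAt_id (t:ℂ)).const_mul a).cexp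
  have := h1.comp_ofReal
  convert this using 1
  ring


/-- The pair `(bpp, Bmm)` solves the separated NLS system
`2i ∂ₜ b = -∂ₓ² b - 8 b² B` and `2i ∂ₜ B = ∂ₓ² B + 8 b B²`
at every point with `cos(2x) ≠ 0`. -/
theorem stmt_0 (x t : ℝ) (h : Complex.cos (2 * (x : ℂ)) ≠ 0) :
    2 * I * deriv (fun t' : ℝ => bpp x t') t
      = -(deriv (fun x' : ℝ => deriv (fun x'' : ℝ => bpp x'' t) x') x)
        - 8 * (bpp x t) ^ 2 * Bmm x t ∧
    2 * I * deriv (fun t' : ℝ => Bmm x t') t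
      = deriv (fun x' : ℝ => deriv (fun x'' : ℝ => Bmm x'' t) x') x
        + 8 * bpp x t * (Bmm x t) ^ 2 := by
  have hπ : (Real.pi : ℂ) ≠ 0 := by exact_mod_cast Real.pi_ne_zero
  have hE : Complex.exp (-2*I*(t:ℂ)) * Complex.exp (2*I*(t:ℂ)) = 1 := by
    rw [← Complex.exp_add]
    norm_num
  have hbt : HasDerivAt (fun t' : ℝ => bpp x t')
      (-(Real.pi:ℂ) * (Complex.exp (-2*I*(t:ℂ)) * (-2*I)) / Complex.cos (2*(x:ℂ))) t := by
    simp only [bpp]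
    exact ((hexpD (-2*I) t).const_mul (-(Real.pi:ℂ))).div_const _
  have hBt : HasDerivAt (fun t' : ℝ => Bmm x t')
      (Complex.exp (2*I*(t:ℂ)) * (2*I) / ((Real.pi:ℂ) * Complex.cos (2*(x:ℂ)))) t := by
    simp only [Bmm]
    exact (hexpD (2*I) t).div_const _
  constructor
  · rw [hbt.deriv]
    simp only [bpp, Bmm]
    rw [d2 (-(Real.pi:ℂ) * Complex.exp (-2*I*(t:ℂ))) x h]
    simp only [show (-2*I*(t:ℂ)) = -(2*I*(t:ℂ)) from by ring] at hE ⊢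
    field_simp
    linear_combination (4*Complex.cos (2*(x:ℂ))^2) * Complex.I_sq + 8 * hE
  · rw [hBt.deriv]
    simp only [Bmm, bpp]
    rw [show (fun x'' : ℝ => Complex.exp (2*I*(t:ℂ)) / ((Real.pi:ℂ) * Complex.cos (2*(x'':ℂ))))
        = fun x'' : ℝ => (Complex.exp (2*I*(t:ℂ)) / (Real.pi:ℂ)) / Complex.cos (2*(x'':ℂ))
      from funext fun x'' => (div_div _ _ _).symm]
    rw [d2 (Complex.exp (2*I*(t:ℂ)) / (Real.pi:ℂ)) x h]
    simp only [show (-2*I*(t:ℂ)) = -(2*I*(t:ℂ)) from by ring] at hE ⊢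
    field_simp
    linear_combination (4*Complex.cos (2*(x:ℂ))^2) * Complex.I_sq + 8 * hE
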